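/- Let S and S₁ be symmetric bilinear forms on ℝ². Suppose that S₁(v, w) = 0 for every pair of linearly independent vectors v, w ∈ ℝ² with S(v, w) = 0. Then there exists λ ∈ ℝ such that S₁ = λ·S. -/
import Mathlib

open Polynomial

lemma indep2 (v w : ℝ × ℝ) (hd : v.1 * w.2 - v.2 * w.1 ≠ 0) :
    LinearIndependent ℝ ![v, w] := by
  rw [LinearIndependent.pair_iff]
  intro s t hst
  rw [Prod.ext_iff] at hst
  obtain ⟨h1, h2⟩ := hst
  simp [Prod.fst_add, Prod.snd_add] at h1 h2
  constructor
  · have hs : s * (v.1 * w.2 - v.2 * w.1) = 0 := by linear_combination w.2 * h1 - w.1 * h2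
    exact (mul_eq_zero.mp hs).resolve_right hd
  · have ht : t * (v.1 * w.2 - v.2 * w.1) = 0 := by linear_combination (-v.2) * h1 + v.1 * h2
    exact (mul_eq_zero.mp ht).resolve_right hd

lemma expand2 (B : (ℝ × ℝ) →ₗ[ℝ] (ℝ × ℝ) →ₗ[ℝ] ℝ) (x y z t : ℝ) :
    B (x, y) (z, t) = x * z * B (1, 0) (1, 0) + x * t * B (1, 0) (0, 1)
      + y * z * B (0, 1) (1, 0) + y * t * B (0, 1) (0, 1) := by
  have h1 : ((x, y) : ℝ × ℝ) = x • ((1 : ℝ), (0 : ℝ)) + y • ((0 : ℝ), (1 : ℝ)) := by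
    simp [Prod.ext_iff]
  have h2 : ((z, t) : ℝ × ℝ) = z • ((1 : ℝ), (0 : ℝ)) + t • ((0 : ℝ), (1 : ℝ)) := by
    simp [Prod.ext_iff]
  rw [h1, h2]
  simp only [map_add, map_smul, LinearMap.add_apply, LinearMap.smul_apply, smul_eq_mul]
  ring

set_option maxHeartbeats 1000000 in
theorem statement6 (S S₁ : (ℝ × ℝ) →ₗ[ℝ] (ℝ × ℝ) →ₗ[ℝ] ℝ)
    (hS : ∀ v w : ℝ × ℝ, S v w = S w v)
    (hS₁ : ∀ v w : ℝ × ℝ, S₁ v w = S₁ w v)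
    (h : ∀ v w : ℝ × ℝ, LinearIndependent ℝ ![v, w] → S v w = 0 → S₁ v w = 0) :
    ∃ lam : ℝ, S₁ = lam • S := by
  set a := S (1, 0) (1, 0) with ha
  set b := S (1, 0) (0, 1) with hb
  set c := S (0, 1) (0, 1) with hc
  set a₁ := S₁ (1, 0) (1, 0) with ha₁
  set b₁ := S₁ (1, 0) (0, 1) with hb₁
  set c₁ := S₁ (0, 1) (0, 1) with hc₁
  have hSb : S (0, 1) (1, 0) = b := hS _ _
  have hS₁b : S₁ (0, 1) (1, 0) = b₁ := hS₁ _ _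
  -- final step: once we know the basis values are proportional, conclude
  have final : ∀ lam : ℝ, a₁ = lam * a → b₁ = lam * b → c₁ = lam * c → S₁ = lam • S := by
    intro lam e1 e2 e3
    apply LinearMap.ext; intro v
    apply LinearMap.ext; intro w
    have hv : v = (v.1, v.2) := rfl
    have hw : w = (w.1, w.2) := rfl
    rw [LinearMap.smul_apply, LinearMap.smul_apply, smul_eq_mul, hv, hw,
      expand2 S₁, expand2 S, hSb, hS₁b]
    rw [← ha, ← hb, ← hc, ← ha₁, ← hb₁, ← hc₁, e1, e2, e3]
    ring
  by_cases hz : a = 0 ∧ b = 0 ∧ c = 0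
  · obtain ⟨hza, hzb, hzc⟩ := hz
    have hS0 : ∀ v w : ℝ × ℝ, S v w = 0 := by
      intro v w
      have := expand2 S v.1 v.2 w.1 w.2
      simp only [Prod.mk.eta] at this
      rw [this, hSb, ← ha, ← hb, ← hc, hza, hzb, hzc]; ring
    have e1 : S₁ (1, 0) (0, 1) = 0 := h _ _ (indep2 _ _ (by norm_num)) (hS0 _ _)
    have e2 : S₁ (1, 0) (1, 1) = 0 := h _ _ (indep2 _ _ (by norm_num)) (hS0 _ _)
    have e3 : S₁ (1, 1) (0, 1) = 0 := h _ _ (indep2 _ _ (by norm_num)) (hS0 _ _)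
    rw [expand2] at e2 e3
    rw [hS₁b, ← ha₁, ← hb₁, ← hc₁] at e2 e3
    rw [← hb₁] at e1
    refine ⟨0, final 0 ?_ ?_ ?_⟩ <;> nlinarith [e1, e2, e3]
  · -- key identity
    have key : ∀ t : ℝ, a + 2 * t * b + t ^ 2 * c ≠ 0 →
        (a₁ * b - a * b₁) + (a₁ * c - a * c₁) * t + (b₁ * c - b * c₁) * t ^ 2 = 0 := by
      intro t hq
      set v : ℝ × ℝ := (1, t) with hv
      set w : ℝ × ℝ := (b + t * c, -(a + t * b)) with hw
      have hind : LinearIndependent ℝ ![v, w] := by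
        apply indep2
        simp only [hv, hw]
        intro hcon
        apply hq
        nlinarith [hcon]
      have hSvw : S v w = 0 := by
        rw [hv, hw, expand2, hSb, ← ha, ← hb, ← hc]; ring
      have := h v w hind hSvw
      rw [hv, hw, expand2, hS₁b, ← ha₁, ← hb₁, ← hc₁] at this
      nlinarith [this]
    set A := a₁ * b - a * b₁ with hA
    set B := a₁ * c - a * c₁ with hB
    set Cc := b₁ * c - b * c₁ with hCc
    have habc : A = 0 ∧ B = 0 ∧ Cc = 0 := by
      set q : ℝ[X] := C a + C (2 * b) * X + C c * X ^ 2 with hqdef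
      have hq0 : q ≠ 0 := by
        intro hq
        apply hz
        have h0 : q.coeff 0 = 0 := by rw [hq]; simp
        have h1 : q.coeff 1 = 0 := by rw [hq]; simp
        have h2 : q.coeff 2 = 0 := by rw [hq]; simp
        simp [hqdef, coeff_add, coeff_C, coeff_X, coeff_X_pow] at h0 h1 h2
        refine ⟨h0, by linarith, h2⟩
      by_contra hcon
      have hp0 : (C A + C B * X + C Cc * X ^ 2 : ℝ[X]) ≠ 0 := by
        intro hp
        apply hcon
        have h0 : (C A + C B * X + C Cc * X ^ 2 : ℝ[X]).coeff 0 = 0 := by rw [hp]; simp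
        have h1 : (C A + C B * X + C Cc * X ^ 2 : ℝ[X]).coeff 1 = 0 := by rw [hp]; simp
        have h2 : (C A + C B * X + C Cc * X ^ 2 : ℝ[X]).coeff 2 = 0 := by rw [hp]; simp
        simp [coeff_add, coeff_C, coeff_X, coeff_X_pow] at h0 h1 h2
        exact ⟨h0, h1, h2⟩
      have hfin : ({ x | IsRoot (C A + C B * X + C Cc * X ^ 2 : ℝ[X]) x } ∪
          { x | IsRoot q x }).Finite :=
        (Polynomial.finite_setOf_isRoot hp0).union (Polynomial.finite_setOf_isRoot hq0)
      obtain ⟨t, ht⟩ := hfin.infinite_compl.nonempty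
      simp only [Set.mem_compl_iff, Set.mem_union, Set.mem_setOf_eq, not_or] at ht
      obtain ⟨htp, htq⟩ := ht
      apply htp
      have hqt : a + 2 * t * b + t ^ 2 * c ≠ 0 := by
        intro hcon2
        apply htq
        simp only [IsRoot.def, hqdef, eval_add, eval_mul, eval_pow, eval_C, eval_X]
        linear_combination hcon2
      have hkey := key t hqt
      simp only [IsRoot.def, eval_add, eval_mul, eval_pow, eval_C, eval_X]
      linear_combination hkey
    obtain ⟨eA, eB, eC⟩ := habc
    by_cases hane : a ≠ 0
    · refine ⟨a₁ / a, final _ (by field_simp) ?_ ?_⟩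
      · field_simp; nlinarith [eA]
      · field_simp; nlinarith [eB]
    · push_neg at hane
      by_cases hbne : b ≠ 0
      · refine ⟨b₁ / b, final _ ?_ (by field_simp) ?_⟩
        · rw [hane]
          have h'' : a₁ * b - a * b₁ = 0 := by rw [← hA]; exact eA
          have : a₁ * b = 0 := by rw [hane] at h''; linarith
          have : a₁ = 0 := by
            rcases mul_eq_zero.mp this with h' | h'
            · exact h'
            · exact absurd h' hbne
          rw [this]; ring
        · field_simp; nlinarith [eC]
      · push_neg at hbne
        have hcne : c ≠ 0 := by
          intro hc0; exact hz ⟨hane, hbne, hc0⟩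
        refine ⟨c₁ / c, final _ ?_ ?_ (by field_simp)⟩
        · rw [hane]
          have h'' : a₁ * c - a * c₁ = 0 := by rw [← hB]; exact eB
          have h' : a₁ * c = 0 := by rw [hane] at h''; linarith
          have : a₁ = 0 := (mul_eq_zero.mp h').resolve_right hcne
          rw [this]; ring
        · rw [hbne]
          have h'' : b₁ * c - b * c₁ = 0 := by rw [← hCc]; exact eC
          have h' : b₁ * c = 0 := by rw [hbne] at h''; linarith
          have : b₁ = 0 := (mul_eq_zero.mp h').resolve_right hcne
          rw [this]; ring
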